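/- arXiv:0807.1072 — 2 statements merged into one kernel-verified Lean document; each statement's English description precedes it below -/
import Mathlib

section
/- Let E = ℝ^m and let the signal be given by the recursion X_{k+1} = b(X_k) + σ(X_k)η_k, where b : ℝ^m → ℝ^m and σ : ℝ^m → ℝ^{m×m} are uniformly continuous, ‖σ(x)v‖ ≥ α‖v‖ for all x, v ∈ ℝ^m and some α > 0, and (η_k) are i.i.d. ℝ^m-valued random variables whose law has a density q_η with respect to Lebesgue measure on ℝ^m. Then the associated transition kernel P(x,·) = law of b(x) + σ(x)η_0 satisfies: ‖P(x_k,·) − P(y_k,·)‖_TV → 0 whenever ‖x_k − y_k‖ → 0. -/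
open MeasureTheory ProbabilityTheory Filter
open scoped ENNReal NNReal Topology

noncomputable section

/-- Total variation distance between two measures. -/
def tvDist {S : Type*} [MeasurableSpace S] (ρ ρ' : Measure S) : ℝ :=
  sSup { r : ℝ | ∃ f : S → ℝ, Measurable f ∧ (∀ x, |f x| ≤ 1) ∧
    r = |(∫ x, f x ∂ρ) - ∫ x, f x ∂ρ'| }

variable {m : ℕ}

lemma map_affine (M : Matrix (Fin m) (Fin m) ℝ) (hdet : M.det ≠ 0) (c : Fin m → ℝ) :
    Measure.map (fun w => M.mulVec w + c) (volume : Measure (Fin m → ℝ))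
      = ENNReal.ofReal |M.det|⁻¹ • volume := by
  have h1 : (fun w => M.mulVec w + c) = (fun z => z + c) ∘ (fun w => M.mulVec w) := rfl
  have h2 : (fun w : Fin m → ℝ => M.mulVec w) = ⇑(Matrix.toLin' M) := by
    funext w; simp [Matrix.toLin'_apply]
  have hld : LinearMap.det (Matrix.toLin' M) ≠ 0 := by rwa [LinearMap.det_toLin']
  rw [h1, ← Measure.map_map (measurable_add_const c) (by rw [h2]; exact (Matrix.toLin' M).continuous_of_finiteDimensional.measurable)]
  rw [h2, Measure.map_linearMap_addHaar_eq_smul_addHaar volume hld, LinearMap.det_toLin']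
  rw [Measure.map_smul, map_add_right_eq_self _, abs_inv]

lemma measurable_affine (M : Matrix (Fin m) (Fin m) ℝ) (c : Fin m → ℝ) :
    Measurable (fun w : Fin m → ℝ => M.mulVec w + c) := by
  have h2 : (fun w : Fin m → ℝ => M.mulVec w) = ⇑(Matrix.toLin' M) := by
    funext w; simp [Matrix.toLin'_apply]
  exact (((Matrix.toLin' M).continuous_of_finiteDimensional.congr
    (fun w => by simp [Matrix.toLin'_apply])).add continuous_const).measurable

lemma integral_comp_affine (M : Matrix (Fin m) (Fin m) ℝ) (hdet : M.det ≠ 0) (c : Fin m → ℝ)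
    (h : (Fin m → ℝ) → ℝ) (hh : Measurable h) :
    ∫ w, h (M.mulVec w + c) = |M.det|⁻¹ * ∫ z, h z := by
  have := integral_map (μ := (volume : Measure (Fin m → ℝ))) (φ := fun w => M.mulVec w + c)
    (f := h) (measurable_affine M c).aemeasurable hh.stronglyMeasurable.aestronglyMeasurable
  rw [map_affine M hdet c, integral_smul_measure] at this
  rw [← this, ENNReal.toReal_ofReal (inv_nonneg.mpr (abs_nonneg _)), smul_eq_mul]

lemma integrable_comp_affine (M : Matrix (Fin m) (Fin m) ℝ) (hdet : M.det ≠ 0) (c : Fin m → ℝ)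
    (h : (Fin m → ℝ) → ℝ) (hh : Measurable h) (hint : Integrable h) :
    Integrable (fun w => h (M.mulVec w + c)) := by
  have : Integrable h (Measure.map (fun w => M.mulVec w + c) (volume : Measure (Fin m → ℝ))) := by
    rw [map_affine M hdet c]
    exact hint.smul_measure ENNReal.ofReal_ne_top
  exact (integrable_map_measure hh.stronglyMeasurable.aestronglyMeasurable
    (measurable_affine M c).aemeasurable).mp this
variable {m : ℕ}

lemma key_facts (M : ℕ → Matrix (Fin m) (Fin m) ℝ) (c : ℕ → Fin m → ℝ)
    (hΦ : Tendsto (fun k => LinearMap.toContinuousLinearMap (Matrix.toLin' (M k))) atTop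
      (𝓝 (1 : (Fin m → ℝ) →L[ℝ] (Fin m → ℝ))))
    (hc : Tendsto c atTop (𝓝 0)) :
    Tendsto (fun k => |(M k).det|) atTop (𝓝 1) ∧
    Tendsto (fun k => ‖LinearMap.toContinuousLinearMap (Matrix.toLin' (M k)) - 1‖) atTop (𝓝 0) ∧
    ∀ w, Tendsto (fun k => (M k).mulVec w + c k) atTop (𝓝 w) := by
  set Φ : ℕ → (Fin m → ℝ) →L[ℝ] (Fin m → ℝ) :=
    fun k => LinearMap.toContinuousLinearMap (Matrix.toLin' (M k)) with hΦdef
  have hcoe : ∀ k w, (M k).mulVec w = Φ k w := by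
    intro k w; simp [hΦdef, Matrix.toLin'_apply]
  have hdet1 : Tendsto (fun k => (M k).det) atTop (𝓝 1) := by
    have hd : ∀ k, (M k).det = (Φ k).det := by
      intro k
      simp [hΦdef, ContinuousLinearMap.det, LinearMap.det_toLin']
    have := (ContinuousLinearMap.continuous_det.tendsto
      (1 : (Fin m → ℝ) →L[ℝ] (Fin m → ℝ))).comp hΦ
    have h1 : (1 : (Fin m → ℝ) →L[ℝ] (Fin m → ℝ)).det = 1 := by
      rw [ContinuousLinearMap.det, ContinuousLinearMap.one_def, ContinuousLinearMap.coe_id,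
        LinearMap.det_id]
    rw [h1] at this
    exact this.congr fun k => (hd k).symm
  have habs : Tendsto (fun k => |(M k).det|) atTop (𝓝 1) := by
    have := (continuous_abs.tendsto 1).comp hdet1
    simpa [Function.comp_def] using this
  have hnorm : Tendsto (fun k => ‖Φ k - 1‖) atTop (𝓝 0) := by
    have := (hΦ.sub_const 1).norm
    simpa using this
  refine ⟨habs, hnorm, fun w => ?_⟩
  have h1 : Tendsto (fun k => Φ k w - w) atTop (𝓝 0) := by
    refine squeeze_zero_norm (a := fun k => ‖Φ k - 1‖ * ‖w‖) (fun k => ?_) ?_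
    · 
      have : Φ k w - w = (Φ k - 1) w := by simp
      rw [this]
      exact (Φ k - 1).le_opNorm w
    · simpa using hnorm.mul_const ‖w‖
  have := (h1.add hc).add_const w
  have h2 : Tendsto (fun k => Φ k w - w + c k + w) atTop (𝓝 w) := by simpa using this
  exact h2.congr fun k => by rw [hcoe]; abel

lemma tendsto_L1_affine
    (q : (Fin m → ℝ) → ℝ) (hq : Measurable q) (hqi : Integrable q)
    (M : ℕ → Matrix (Fin m) (Fin m) ℝ) (c : ℕ → Fin m → ℝ)
    (hdet : ∀ k, (M k).det ≠ 0)
    (hΦ : Tendsto (fun k => LinearMap.toContinuousLinearMap (Matrix.toLin' (M k))) atTop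
      (𝓝 (1 : (Fin m → ℝ) →L[ℝ] (Fin m → ℝ))))
    (hc : Tendsto c atTop (𝓝 0)) :
    Tendsto (fun k => ∫ w, |q ((M k).mulVec w + c k) * |(M k).det| - q w|) atTop (𝓝 0) := by
  obtain ⟨habs, hnorm, hTw⟩ := key_facts M c hΦ hc
  rw [NormedAddCommGroup.tendsto_nhds_zero]
  intro ε hε
  obtain ⟨g, hgsupp, hgL1, hgcont, hgint⟩ :=
    hqi.exists_hasCompactSupport_integral_sub_le (by positivity : (0:ℝ) < ε/4)
  obtain ⟨r', hr'⟩ := hgsupp.isBounded.subset_closedBall 0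
  set r : ℝ := max r' 0 with hrdef
  have hr : tsupport g ⊆ Metric.closedBall 0 r :=
    hr'.trans (Metric.closedBall_subset_closedBall (le_max_left _ _))
  have hr0 : 0 ≤ r := le_max_right _ _
  obtain ⟨G, hG⟩ := hgsupp.exists_bound_of_continuous hgcont
  have hG0 : 0 ≤ G := le_trans (norm_nonneg _) (hG 0)
  -- the "B" term tends to zero by dominated convergence
  have hB : Tendsto (fun k => ∫ w, |g ((M k).mulVec w + c k) * |(M k).det| - g w|) atTop
      (𝓝 0) := by
    have h0 : ∫ w : Fin m → ℝ, (0:ℝ) = 0 := by simp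
    rw [← h0]
    apply tendsto_integral_filter_of_dominated_convergence
      (bound := Set.indicator (Metric.closedBall (0 : Fin m → ℝ) (2*r+2)) (fun _ => 3*G))
    · refine Eventually.of_forall fun k => ?_
      have hTcont : Continuous fun w : Fin m → ℝ => (M k).mulVec w + c k :=
        ((Matrix.toLin' (M k)).continuous_of_finiteDimensional.congr
          (fun w => by simp [Matrix.toLin'_apply])).add continuous_const
      exact (((hgcont.comp hTcont).mul continuous_const).sub hgcont).abs.aestronglyMeasurable
    · have e1 : ∀ᶠ k in atTop, ‖LinearMap.toContinuousLinearMap (Matrix.toLin' (M k)) - 1‖ < 1/2 :=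
        hnorm.eventually_lt_const (by norm_num)
      have hcn : Tendsto (fun k => ‖c k‖) atTop (𝓝 0) := by simpa using hc.norm
      have e2 : ∀ᶠ k in atTop, ‖c k‖ < 1 := hcn.eventually_lt_const (by norm_num)
      have e3 : ∀ᶠ k in atTop, |(M k).det| < 2 := habs.eventually_lt_const (by norm_num)
      filter_upwards [e1, e2, e3] with k hk1 hk2 hk3
      refine Eventually.of_forall fun w => ?_
      set Φk := LinearMap.toContinuousLinearMap (Matrix.toLin' (M k)) with hΦk
      set d := |(M k).det| with hd
      have hd0 : (0:ℝ) ≤ d := abs_nonneg _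
      have hG' : ∀ x, |g x| ≤ G := fun x => by rw [← Real.norm_eq_abs]; exact hG x
      have hcoe : (M k).mulVec w = Φk w := by simp [hΦk, Matrix.toLin'_apply]
      rw [Real.norm_eq_abs, abs_abs]
      by_cases hw : w ∈ Metric.closedBall (0 : Fin m → ℝ) (2*r+2)
      · rw [Set.indicator_of_mem hw]
        calc |g ((M k).mulVec w + c k) * d - g w|
            ≤ |g ((M k).mulVec w + c k) * d| + |g w| := abs_sub _ _
          _ = |g ((M k).mulVec w + c k)| * d + |g w| := by
              rw [abs_mul, abs_abs]
          _ ≤ G * 2 + G := by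
              have := hG' ((M k).mulVec w + c k)
              have := hG' w
              nlinarith
          _ ≤ 3 * G := by linarith
      · rw [Set.indicator_of_notMem hw]
        have hwn : 2*r+2 < ‖w‖ := by
          simpa [Metric.mem_closedBall, dist_zero_right] using hw
        have hgw : g w = 0 := by
          apply image_eq_zero_of_notMem_tsupport
          intro hmem
          have := hr hmem
          rw [Metric.mem_closedBall, dist_zero_right] at this
          linarith
        have hsub : ‖Φk w - w‖ ≤ 1/2 * ‖w‖ := by
          have h1 : Φk w - w = (Φk - 1) w := by simp
          rw [h1]
          calc ‖(Φk - 1) w‖ ≤ ‖Φk - 1‖ * ‖w‖ := (Φk - 1).le_opNorm w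
            _ ≤ 1/2 * ‖w‖ := mul_le_mul_of_nonneg_right (le_of_lt hk1) (norm_nonneg _)
        have hTnorm : r < ‖(M k).mulVec w + c k‖ := by
          rw [hcoe]
          have h2 : ‖Φk w‖ ≤ ‖Φk w + c k‖ + ‖c k‖ := by
            have := norm_add_le (Φk w + c k) (-(c k))
            simpa using this
          have h3 : ‖w‖ ≤ ‖Φk w‖ + ‖Φk w - w‖ := by
            have := norm_add_le (Φk w) (w - Φk w)
            simpa [norm_sub_rev] using this
          linarith
        have hgT : g ((M k).mulVec w + c k) = 0 := by
          apply image_eq_zero_of_notMem_tsupport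
          intro hmem
          have := hr hmem
          rw [Metric.mem_closedBall, dist_zero_right] at this
          linarith
        simp [hgw, hgT]
    · apply (integrable_indicator_iff measurableSet_closedBall).mpr
      exact (integrableOn_const_iff (C := 3*G)).mpr (Or.inr measure_closedBall_lt_top)
    · refine Eventually.of_forall fun w => ?_
      have h1 : Tendsto (fun k => g ((M k).mulVec w + c k) * |(M k).det|) atTop
          (𝓝 (g w * 1)) := ((hgcont.tendsto w).comp (hTw w)).mul habs
      have := (h1.sub_const (g w)).abs
      simpa using this
  -- final estimate
  filter_upwards [hB.eventually_lt_const (by positivity : (0:ℝ) < ε/2)] with k hk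
  set d := |(M k).det| with hddef
  have hd0 : (0:ℝ) < d := abs_pos.mpr (hdet k)
  have hqT : Integrable (fun w => q ((M k).mulVec w + c k)) :=
    integrable_comp_affine (M k) (hdet k) (c k) q hq hqi
  have hgT : Integrable (fun w => g ((M k).mulVec w + c k)) :=
    integrable_comp_affine (M k) (hdet k) (c k) g hgcont.measurable hgint
  have hF1 : Integrable (fun w => |q ((M k).mulVec w + c k) - g ((M k).mulVec w + c k)| * d) :=
    ((hqT.sub hgT).abs).mul_const d
  have hF2 : Integrable (fun w => |g ((M k).mulVec w + c k) * d - g w|) :=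
    ((hgT.mul_const d).sub hgint).abs
  have hF3 : Integrable (fun w => |g w - q w|) := (hgint.sub hqi).abs
  have hLHS : Integrable (fun w => |q ((M k).mulVec w + c k) * d - q w|) :=
    ((hqT.mul_const d).sub hqi).abs
  have hpt : ∀ w, |q ((M k).mulVec w + c k) * d - q w| ≤
      |q ((M k).mulVec w + c k) - g ((M k).mulVec w + c k)| * d +
      (|g ((M k).mulVec w + c k) * d - g w| + |g w - q w|) := by
    intro w
    have e : q ((M k).mulVec w + c k) * d - q w =
        (q ((M k).mulVec w + c k) - g ((M k).mulVec w + c k)) * d +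
        ((g ((M k).mulVec w + c k) * d - g w) + (g w - q w)) := by ring
    rw [e]
    refine (abs_add_le _ _).trans (add_le_add ?_ (abs_add_le _ _))
    rw [abs_mul, abs_of_nonneg hd0.le]
  have hsum : Integrable (fun w => |q ((M k).mulVec w + c k) - g ((M k).mulVec w + c k)| * d +
      (|g ((M k).mulVec w + c k) * d - g w| + |g w - q w|)) := hF1.add (hF2.add hF3)
  have hsum2 : Integrable (fun w => |g ((M k).mulVec w + c k) * d - g w| + |g w - q w|) :=
    hF2.add hF3
  have hmono : ∫ w, |q ((M k).mulVec w + c k) * d - q w| ≤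
      ∫ w, (|q ((M k).mulVec w + c k) - g ((M k).mulVec w + c k)| * d +
        (|g ((M k).mulVec w + c k) * d - g w| + |g w - q w|)) :=
    integral_mono hLHS hsum hpt
  have e1 : ∫ w, (|q ((M k).mulVec w + c k) - g ((M k).mulVec w + c k)| * d +
        (|g ((M k).mulVec w + c k) * d - g w| + |g w - q w|)) =
      (∫ w, |q ((M k).mulVec w + c k) - g ((M k).mulVec w + c k)| * d) +
      ∫ w, (|g ((M k).mulVec w + c k) * d - g w| + |g w - q w|) := integral_add hF1 hsum2
  have e2 : ∫ w, (|g ((M k).mulVec w + c k) * d - g w| + |g w - q w|) =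
      (∫ w, |g ((M k).mulVec w + c k) * d - g w|) + ∫ w, |g w - q w| := integral_add hF2 hF3
  rw [e1, e2] at hmono
  have hI1 : ∫ w, |q ((M k).mulVec w + c k) - g ((M k).mulVec w + c k)| * d ≤ ε/4 := by
    rw [integral_mul_const]
    have hcv := integral_comp_affine (M k) (hdet k) (c k) (fun z => |q z - g z|)
      ((hq.sub hgcont.measurable).abs)
    rw [hcv, ← hddef]
    have hL1 : ∫ z, |q z - g z| ≤ ε/4 := by
      simpa [Real.norm_eq_abs] using hgL1
    have hnn : 0 ≤ ∫ z, |q z - g z| := integral_nonneg fun z => abs_nonneg _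
    calc d⁻¹ * (∫ z, |q z - g z|) * d = ∫ z, |q z - g z| := by field_simp
      _ ≤ ε/4 := hL1
  have hI3 : ∫ w, |g w - q w| ≤ ε/4 := by
    have : (fun w => |g w - q w|) = fun w => |q w - g w| := by
      funext w; rw [abs_sub_comm]
    rw [this]
    simpa [Real.norm_eq_abs] using hgL1
  have hnnL : 0 ≤ ∫ w, |q ((M k).mulVec w + c k) * d - q w| :=
    integral_nonneg fun w => abs_nonneg _
  rw [Real.norm_eq_abs, abs_of_nonneg hnnL]
  linarith

lemma integral_withDensity_ofReal (q : (Fin m → ℝ) → ℝ) (hq : Measurable q)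
    (h0 : ∀ z, 0 ≤ q z) (h : (Fin m → ℝ) → ℝ) :
    ∫ z, h z ∂((volume : Measure (Fin m → ℝ)).withDensity fun z => ENNReal.ofReal (q z))
      = ∫ z, q z * h z := by
  have hqe : (fun z : Fin m → ℝ => ENNReal.ofReal (q z))
      = fun z => ((Real.toNNReal (q z) : ℝ≥0) : ℝ≥0∞) := rfl
  rw [hqe, integral_withDensity_eq_integral_smul hq.real_toNNReal h]
  congr 1
  funext z
  rw [NNReal.smul_def, Real.coe_toNNReal _ (h0 z), smul_eq_mul]

lemma measurable_affine' (c : Fin m → ℝ) (M : Matrix (Fin m) (Fin m) ℝ) :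
    Measurable (fun w : Fin m → ℝ => c + M.mulVec w) := by
  have h : (fun w : Fin m → ℝ => c + M.mulVec w) = fun w => M.mulVec w + c :=
    funext fun w => add_comm _ _
  rw [h]; exact measurable_affine M c

lemma tv_core (b1 b2 : Fin m → ℝ) (A B : Matrix (Fin m) (Fin m) ℝ)
    (hA : A.det ≠ 0) (hB : B.det ≠ 0)
    (q : (Fin m → ℝ) → ℝ) (hq : Measurable q) (hq0 : ∀ z, 0 ≤ q z) (hqi : Integrable q)
    (f : (Fin m → ℝ) → ℝ) (hf : Measurable f) (hf1 : ∀ w, |f w| ≤ 1) :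
    |(∫ w, f w ∂(Measure.map (fun z => b1 + A.mulVec z)
        ((volume : Measure (Fin m → ℝ)).withDensity fun z => ENNReal.ofReal (q z)))) -
      ∫ w, f w ∂(Measure.map (fun z => b2 + B.mulVec z)
        ((volume : Measure (Fin m → ℝ)).withDensity fun z => ENNReal.ofReal (q z)))| ≤
    ∫ w, |q ((A⁻¹ * B).mulVec w + A⁻¹.mulVec (b2 - b1)) * |(A⁻¹ * B).det| - q w| := by
  have hU : IsUnit A.det := isUnit_iff_ne_zero.mpr hA
  set M : Matrix (Fin m) (Fin m) ℝ := A⁻¹ * B with hMdef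
  set c : Fin m → ℝ := A⁻¹.mulVec (b2 - b1) with hcdef
  have hMdet : M.det ≠ 0 := by
    rw [hMdef, Matrix.det_mul, Matrix.det_nonsing_inv, Ring.inverse_eq_inv]
    exact mul_ne_zero (inv_ne_zero hA) hB
  have hd0 : (0:ℝ) < |M.det| := abs_pos.mpr hMdet
  have haff : ∀ w, b1 + A.mulVec (M.mulVec w + c) = b2 + B.mulVec w := by
    intro w
    rw [Matrix.mulVec_add, Matrix.mulVec_mulVec, Matrix.mulVec_mulVec,
      show A * M = B by rw [hMdef, ← Matrix.mul_assoc, Matrix.mul_nonsing_inv _ hU, Matrix.one_mul],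
      Matrix.mul_nonsing_inv _ hU, Matrix.one_mulVec]
    abel
  have step1 : (∫ w, f w ∂(Measure.map (fun z => b1 + A.mulVec z)
      ((volume : Measure (Fin m → ℝ)).withDensity fun z => ENNReal.ofReal (q z))))
      = ∫ z, q z * f (b1 + A.mulVec z) := by
    rw [integral_map (measurable_affine' b1 A).aemeasurable
      hf.stronglyMeasurable.aestronglyMeasurable]
    exact integral_withDensity_ofReal q hq hq0 _
  have step3 : (∫ w, f w ∂(Measure.map (fun z => b2 + B.mulVec z)
      ((volume : Measure (Fin m → ℝ)).withDensity fun z => ENNReal.ofReal (q z))))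
      = ∫ w, q w * f (b2 + B.mulVec w) := by
    rw [integral_map (measurable_affine' b2 B).aemeasurable
      hf.stronglyMeasurable.aestronglyMeasurable]
    exact integral_withDensity_ofReal q hq hq0 _
  have hH : Measurable (fun z => q z * f (b1 + A.mulVec z)) :=
    hq.mul (hf.comp (measurable_affine' b1 A))
  have step2 : ∫ z, q z * f (b1 + A.mulVec z)
      = |M.det| * ∫ w, q (M.mulVec w + c) * f (b2 + B.mulVec w) := by
    have hcv := integral_comp_affine M hMdet c _ hH
    simp only [haff] at hcv
    rw [hcv]
    field_simp
  -- integrability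
  have hfB : AEStronglyMeasurable (fun w => f (b2 + B.mulVec w)) (volume : Measure (Fin m → ℝ)) :=
    (hf.comp (measurable_affine' b2 B)).stronglyMeasurable.aestronglyMeasurable
  have hfBbdd : ∃ C, ∀ w, ‖f (b2 + B.mulVec w)‖ ≤ C :=
    ⟨1, fun w => by rw [Real.norm_eq_abs]; exact hf1 _⟩
  have hqT : Integrable (fun w => q (M.mulVec w + c)) :=
    integrable_comp_affine M hMdet c q hq hqi
  have intX : Integrable (fun w => |M.det| * (q (M.mulVec w + c) * f (b2 + B.mulVec w))) := by
    have h1 : Integrable (fun w => f (b2 + B.mulVec w) * q (M.mulVec w + c)) :=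
      hqT.bdd_mul hfB (ae_of_all _ hfBbdd.choose_spec)
    exact (h1.const_mul |M.det|).congr (Eventually.of_forall fun w => by ring)
  have intY : Integrable (fun w => q w * f (b2 + B.mulVec w)) :=
    (hqi.bdd_mul hfB (ae_of_all _ hfBbdd.choose_spec)).congr (Eventually.of_forall fun w => by ring)
  have intD : Integrable (fun w => |q (M.mulVec w + c) * |M.det| - q w|) :=
    ((hqT.mul_const _).sub hqi).abs
  have hdiff : (∫ w, f w ∂(Measure.map (fun z => b1 + A.mulVec z)
        ((volume : Measure (Fin m → ℝ)).withDensity fun z => ENNReal.ofReal (q z))))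
      - (∫ w, f w ∂(Measure.map (fun z => b2 + B.mulVec z)
        ((volume : Measure (Fin m → ℝ)).withDensity fun z => ENNReal.ofReal (q z))))
      = ∫ w, (|M.det| * (q (M.mulVec w + c) * f (b2 + B.mulVec w))
          - q w * f (b2 + B.mulVec w)) := by
    rw [step1, step2, step3, ← integral_const_mul, integral_sub intX intY]
  rw [hdiff, ← Real.norm_eq_abs]
  calc ‖∫ w, (|M.det| * (q (M.mulVec w + c) * f (b2 + B.mulVec w))
          - q w * f (b2 + B.mulVec w))‖
      ≤ ∫ w, ‖|M.det| * (q (M.mulVec w + c) * f (b2 + B.mulVec w))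
          - q w * f (b2 + B.mulVec w)‖ := norm_integral_le_integral_norm _
    _ ≤ ∫ w, |q (M.mulVec w + c) * |M.det| - q w| := by
        apply integral_mono ((intX.sub intY).norm.congr
          (Eventually.of_forall fun w => by simp [Pi.sub_apply])) intD
        intro w
        simp only [Pi.sub_apply]
        have e : |M.det| * (q (M.mulVec w + c) * f (b2 + B.mulVec w))
            - q w * f (b2 + B.mulVec w)
            = (q (M.mulVec w + c) * |M.det| - q w) * f (b2 + B.mulVec w) := by ring
        rw [Real.norm_eq_abs, e, abs_mul]
        have := hf1 (b2 + B.mulVec w)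
        nlinarith [abs_nonneg (q (M.mulVec w + c) * |M.det| - q w)]

/-- For the signal recursion `X_{k+1} = b(X_k) + σ(X_k) η_k` with `b, σ`
uniformly continuous, `σ` uniformly bounded below (`‖σ(x)v‖ ≥ α‖v‖` for some `α > 0`), and
i.i.d. noise `η_k` with density `q_η` w.r.t. Lebesgue measure, the associated transition
kernel `P(x,·) = law of b(x) + σ(x) η_0` satisfies
`‖P(x_k,·) − P(y_k,·)‖_TV → 0` whenever `‖x_k − y_k‖ → 0`. -/
theorem transition_kernel_TV_uniformly_continuous
    {m : ℕ}
    (b : (Fin m → ℝ) → (Fin m → ℝ)) (σ : (Fin m → ℝ) → Matrix (Fin m) (Fin m) ℝ)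
    (hb : UniformContinuous b) (hσ : UniformContinuous σ)
    (α : ℝ) (hα : 0 < α) (hlow : ∀ x v, α * ‖v‖ ≤ ‖(σ x).mulVec v‖)
    (qη : (Fin m → ℝ) → ℝ) (hqη : Measurable qη) (hqη0 : ∀ z, 0 ≤ qη z)
    (hqη1 : ∫⁻ z, ENNReal.ofReal (qη z) = 1)
    (P : (Fin m → ℝ) → Measure (Fin m → ℝ))
    (hPdef : ∀ x, P x = Measure.map (fun z => b x + (σ x).mulVec z)
      (volume.withDensity fun z => ENNReal.ofReal (qη z)))
    (x y : ℕ → (Fin m → ℝ))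
    (hxy : Tendsto (fun k => ‖x k - y k‖) atTop (𝓝 0)) :
    Tendsto (fun k => tvDist (P (x k)) (P (y k))) atTop (𝓝 0) := by
  classical
  -- integrability of the density
  have hqi : Integrable qη (volume : Measure (Fin m → ℝ)) := by
    refine ⟨hqη.aestronglyMeasurable, ?_⟩
    have h1 : ∫⁻ z, ‖qη z‖ₑ = 1 := by
      rw [← hqη1]
      exact lintegral_congr fun z => by rw [← Real.enorm_eq_ofReal (hqη0 z)]
    rw [HasFiniteIntegral, h1]
    exact ENNReal.one_lt_top
  -- invertibility of σ everywhere
  have hdetx : ∀ p, (σ p).det ≠ 0 := by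
    intro p hd
    obtain ⟨v, hv0, hv⟩ := (Matrix.exists_mulVec_eq_zero_iff).mpr hd
    have h1 := hlow p v
    rw [hv] at h1
    simp only [norm_zero] at h1
    have : 0 < ‖v‖ := norm_pos_iff.mpr hv0
    nlinarith
  have hUx : ∀ p, IsUnit (σ p).det := fun p => isUnit_iff_ne_zero.mpr (hdetx p)
  -- bound on inverse
  have hinv : ∀ p v, ‖((σ p)⁻¹).mulVec v‖ ≤ α⁻¹ * ‖v‖ := by
    intro p v
    have hAu : (σ p).mulVec (((σ p)⁻¹).mulVec v) = v := by
      rw [Matrix.mulVec_mulVec, Matrix.mul_nonsing_inv _ (hUx p), Matrix.one_mulVec]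
    have h1 := hlow p (((σ p)⁻¹).mulVec v)
    rw [hAu] at h1
    have h2 : α⁻¹ * α = 1 := inv_mul_cancel₀ (ne_of_gt hα)
    nlinarith [mul_nonneg (inv_pos.mpr hα).le
      (sub_nonneg.mpr h1), norm_nonneg (((σ p)⁻¹).mulVec v)]
  -- convergence of differences
  have hxy0 : Tendsto (fun k => y k - x k) atTop (𝓝 0) := by
    have h1 : Tendsto (fun k => x k - y k) atTop (𝓝 0) :=
      tendsto_zero_iff_norm_tendsto_zero.mpr hxy
    have := h1.neg
    simp only [neg_sub, neg_zero] at this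
    exact this
  have hpair : Tendsto (fun k => (x k, y k)) atTop (uniformity (Fin m → ℝ)) := by
    rw [uniformity_eq_comap_nhds_zero, tendsto_comap_iff]
    exact hxy0
  have hbd : Tendsto (fun k => b (y k) - b (x k)) atTop (𝓝 0) := by
    have h1 := Filter.Tendsto.comp hb hpair
    rw [uniformity_eq_comap_nhds_zero, tendsto_comap_iff] at h1
    exact h1
  have hσd : Tendsto (fun k => σ (y k) - σ (x k)) atTop (𝓝 0) := by
    have h1 := Filter.Tendsto.comp hσ hpair
    rw [uniformity_eq_comap_nhds_zero, tendsto_comap_iff] at h1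
    exact h1
  -- the affine comparison maps
  set M : ℕ → Matrix (Fin m) (Fin m) ℝ := fun k => (σ (x k))⁻¹ * σ (y k) with hMdef
  set c : ℕ → (Fin m → ℝ) := fun k => ((σ (x k))⁻¹).mulVec (b (y k) - b (x k)) with hcdef
  have hdetM : ∀ k, (M k).det ≠ 0 := by
    intro k
    rw [hMdef]
    simp only
    rw [Matrix.det_mul, Matrix.det_nonsing_inv, Ring.inverse_eq_inv]
    exact mul_ne_zero (inv_ne_zero (hdetx _)) (hdetx _)
  have hcc : Tendsto c atTop (𝓝 0) := by
    refine squeeze_zero_norm (a := fun k => α⁻¹ * ‖b (y k) - b (x k)‖)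
      (fun k => hinv _ _) ?_
    have := hbd.norm.const_mul α⁻¹
    simpa using this
  -- the continuous-linear-map picture
  set L : Matrix (Fin m) (Fin m) ℝ →ₗ[ℝ] ((Fin m → ℝ) →L[ℝ] (Fin m → ℝ)) :=
    (LinearMap.toContinuousLinearMap.toLinearMap).comp (Matrix.toLin'.toLinearMap) with hLdef
  have hLapp : ∀ (A : Matrix (Fin m) (Fin m) ℝ) v, L A v = A.mulVec v := by
    intro A v
    simp [hLdef, Matrix.toLin'_apply]
  have hLcont : Continuous L := L.continuous_of_finiteDimensional
  have hL1 : L (1 : Matrix (Fin m) (Fin m) ℝ) = 1 := by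
    ext v
    rw [hLapp, Matrix.one_mulVec]
    rfl
  have hLeq : ∀ k, LinearMap.toContinuousLinearMap (Matrix.toLin' (M k)) = L (M k) := fun k => rfl
  have hΦ1 : Tendsto (fun k => L (M k) - 1) atTop (𝓝 0) := by
    refine squeeze_zero_norm (a := fun k => α⁻¹ * ‖L (σ (y k) - σ (x k))‖) (fun k => ?_) ?_
    · have hMsub : M k - 1 = (σ (x k))⁻¹ * (σ (y k) - σ (x k)) := by
        rw [Matrix.mul_sub, Matrix.nonsing_inv_mul _ (hUx _), hMdef]
      have : L (M k) - 1 = L ((σ (x k))⁻¹ * (σ (y k) - σ (x k))) := by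
        rw [← hMsub, map_sub, hL1]
      rw [this]
      refine ContinuousLinearMap.opNorm_le_bound _
        (mul_nonneg (inv_pos.mpr hα).le (norm_nonneg _)) fun v => ?_
      have h1 : L ((σ (x k))⁻¹ * (σ (y k) - σ (x k))) v
          = ((σ (x k))⁻¹).mulVec ((σ (y k) - σ (x k)).mulVec v) := by
        rw [hLapp, ← Matrix.mulVec_mulVec]
      rw [h1]
      calc ‖((σ (x k))⁻¹).mulVec ((σ (y k) - σ (x k)).mulVec v)‖
          ≤ α⁻¹ * ‖(σ (y k) - σ (x k)).mulVec v‖ := hinv _ _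
        _ = α⁻¹ * ‖L (σ (y k) - σ (x k)) v‖ := by rw [hLapp]
        _ ≤ α⁻¹ * (‖L (σ (y k) - σ (x k))‖ * ‖v‖) := by
            exact mul_le_mul_of_nonneg_left
              ((L (σ (y k) - σ (x k))).le_opNorm v) (inv_pos.mpr hα).le
        _ = α⁻¹ * ‖L (σ (y k) - σ (x k))‖ * ‖v‖ := by ring
    · have h0 : Tendsto (fun k => L (σ (y k) - σ (x k))) atTop (𝓝 0) := by
        have hcont := hLcont.tendsto (0 : Matrix (Fin m) (Fin m) ℝ)
        rw [map_zero] at hcont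
        exact hcont.comp hσd
      have := h0.norm.const_mul α⁻¹
      simpa using this
  have hΦ : Tendsto (fun k => LinearMap.toContinuousLinearMap (Matrix.toLin' (M k))) atTop
      (𝓝 (1 : (Fin m → ℝ) →L[ℝ] (Fin m → ℝ))) := by
    have := hΦ1.add_const (1 : (Fin m → ℝ) →L[ℝ] (Fin m → ℝ))
    simp only [zero_add] at this
    refine this.congr fun k => ?_
    rw [sub_add_cancel, hLeq]
  -- the L¹ convergence
  have hD := tendsto_L1_affine qη hqη hqi M c hdetM hΦ hcc
  -- per-k bound on tvDist
  have hbound : ∀ k r, (∃ f : (Fin m → ℝ) → ℝ, Measurable f ∧ (∀ w, |f w| ≤ 1) ∧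
      r = |(∫ w, f w ∂(P (x k))) - ∫ w, f w ∂(P (y k))|) →
      r ≤ ∫ w, |qη ((M k).mulVec w + c k) * |(M k).det| - qη w| := by
    rintro k r ⟨f, hfm, hf1, rfl⟩
    have := tv_core (b (x k)) (b (y k)) (σ (x k)) (σ (y k)) (hdetx _) (hdetx _)
      qη hqη hqη0 hqi f hfm hf1
    rw [← hPdef (x k), ← hPdef (y k)] at this
    exact this
  have hDnn : ∀ k, (0:ℝ) ≤ ∫ w, |qη ((M k).mulVec w + c k) * |(M k).det| - qη w| :=
    fun k => integral_nonneg fun w => abs_nonneg _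
  refine squeeze_zero (fun k => ?_) (fun k => ?_) hD
  · unfold tvDist
    refine le_csSup ⟨_, fun r hr => hbound k r hr⟩ ?_
    exact ⟨fun _ => 0, measurable_const, fun w => by norm_num, by simp⟩
  · unfold tvDist
    exact Real.sSup_le (fun r hr => hbound k r hr) (hDnn k)

end
end

section
/- Let α, β, σ ∈ ℝ with σ ≠ 0, let x ∈ ℝ, and let (c_k) be a real sequence with c_k → x. Define u_k = α/(1 + σ²(k+1)) + c_k and w_k = β/(1 + σ²(k+1)) + c_k. Then k · |cos(u_k) − cos(w_k)| → (|β − α|/σ²) · |sin(x)| as k → ∞. In particular, if sin(x) ≠ 0 and α ≠ β, then liminf_k k·|cos(u_k) − cos(w_k)| > 0, so |cos(u_k) − cos(w_k)| decays no faster than order 1/k. -/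
open Filter Real
open scoped Topology

private lemma sin_div_self_tendsto : Tendsto (fun t : ℝ => Real.sin t / t) (𝓝[≠] 0) (𝓝 1) := by
  have h := Real.hasDerivAt_sin 0
  rw [hasDerivAt_iff_tendsto_slope] at h
  have hs : slope Real.sin 0 = fun t => Real.sin t / t := by
    funext t; simp [slope_def_field]
  rw [hs] at h
  simpa using h

/-- Let `σ ≠ 0`, `c_k → x`, and set
`u_k = α/(1 + σ²(k+1)) + c_k`, `w_k = β/(1 + σ²(k+1)) + c_k`.  Then
`k·|cos u_k − cos w_k| → (|β − α|/σ²)·|sin x|`; in particular, if `sin x ≠ 0` and `α ≠ β`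
then `liminf_k k·|cos u_k − cos w_k| > 0`, so the difference decays no faster than `1/k`. -/
theorem cos_difference_rate
    (α β σ x : ℝ) (hσ : σ ≠ 0) (c : ℕ → ℝ) (hc : Tendsto c atTop (𝓝 x))
    (u w : ℕ → ℝ)
    (hu : ∀ k, u k = α / (1 + σ ^ 2 * (k + 1)) + c k)
    (hw : ∀ k, w k = β / (1 + σ ^ 2 * (k + 1)) + c k) :
    Tendsto (fun k : ℕ => (k : ℝ) * |Real.cos (u k) - Real.cos (w k)|)
      atTop (𝓝 (|β - α| / σ ^ 2 * |Real.sin x|)) ∧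
    (Real.sin x ≠ 0 → α ≠ β →
      0 < Filter.liminf (fun k : ℕ => (k : ℝ) * |Real.cos (u k) - Real.cos (w k)|) atTop) := by
  have hσ2 : (0:ℝ) < σ ^ 2 := by positivity
  set D : ℕ → ℝ := fun k => 1 + σ ^ 2 * (k + 1) with hD
  have hDpos : ∀ k, 0 < D k := by
    intro k
    have : (0:ℝ) ≤ σ ^ 2 * (k + 1) := by positivity
    simp only [hD]; linarith
  -- main tendsto
  have hmain : Tendsto (fun k : ℕ => (k : ℝ) * |Real.cos (u k) - Real.cos (w k)|)
      atTop (𝓝 (|β - α| / σ ^ 2 * |Real.sin x|)) := by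
    rcases eq_or_ne α β with hab | hab
    · have : (fun k : ℕ => (k : ℝ) * |Real.cos (u k) - Real.cos (w k)|) = fun _ => (0:ℝ) := by
        funext k; rw [hu, hw, hab]; simp
      rw [this, hab]; simp
    · set ε : ℕ → ℝ := fun k => (α - β) / D k with hε
      have hεne : ∀ k, ε k ≠ 0 := fun k =>
        div_ne_zero (sub_ne_zero.mpr hab) (hDpos k).ne'
      -- D k → atTop
      have hDtop : Tendsto D atTop atTop := by
        apply tendsto_atTop_add_const_left
        apply Tendsto.const_mul_atTop hσ2
        exact tendsto_atTop_add_const_right _ _ tendsto_natCast_atTop_atTop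
      have hDinv : Tendsto (fun k => (D k)⁻¹) atTop (𝓝 0) := hDtop.inv_tendsto_atTop
      have hε0 : Tendsto ε atTop (𝓝 0) := by
        have := hDinv.const_mul (α - β)
        simpa [hε, div_eq_mul_inv] using this
      have hε2 : Tendsto (fun k => ε k / 2) atTop (𝓝[≠] 0) := by
        rw [tendsto_nhdsWithin_iff]
        constructor
        · simpa using hε0.div_const 2
        · exact Eventually.of_forall fun k => by
            simp [Set.mem_compl_iff, div_eq_zero_iff, hεne k]
      -- factor 1: k/D k → 1/σ²
      have hkD : Tendsto (fun k : ℕ => (k : ℝ) / D k) atTop (𝓝 (σ ^ 2)⁻¹) := by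
        have h1 : Tendsto (fun k : ℕ => D k / (k : ℝ)) atTop (𝓝 (σ ^ 2)) := by
          have hone : Tendsto (fun k : ℕ => (1:ℝ) / k) atTop (𝓝 0) :=
            tendsto_one_div_atTop_nhds_zero_nat
          have h2 : Tendsto (fun k : ℕ => (1:ℝ) / k + σ ^ 2 + σ ^ 2 * (1 / k)) atTop
              (𝓝 (0 + σ ^ 2 + σ ^ 2 * 0)) :=
            (hone.add tendsto_const_nhds).add (hone.const_mul _)
          rw [show (0:ℝ) + σ ^ 2 + σ ^ 2 * 0 = σ ^ 2 by ring] at h2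
          apply h2.congr'
          filter_upwards [eventually_ge_atTop 1] with k hk
          have hk0 : (k:ℝ) ≠ 0 := Nat.cast_ne_zero.mpr (by omega)
          simp only [hD]; field_simp; ring
        have := h1.inv₀ hσ2.ne'
        apply this.congr
        intro k; rw [inv_div]
      have hfac1 : Tendsto (fun k : ℕ => |α - β| * ((k : ℝ) / D k)) atTop
          (𝓝 (|α - β| * (σ ^ 2)⁻¹)) := hkD.const_mul _
      -- factor 2: |sin(ε/2)/(ε/2)| → 1
      have hfac2 : Tendsto (fun k : ℕ => |Real.sin (ε k / 2) / (ε k / 2)|) atTop (𝓝 1) := by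
        have := (sin_div_self_tendsto.comp hε2).abs
        simpa using this
      -- factor 3: |sin((u+w)/2)| → |sin x|
      have hm : Tendsto (fun k : ℕ => (u k + w k) / 2) atTop (𝓝 x) := by
        have hu' : Tendsto u atTop (𝓝 x) := by
          have : Tendsto (fun k : ℕ => α * (D k)⁻¹ + c k) atTop (𝓝 (α * 0 + x)) :=
            (hDinv.const_mul α).add hc
        
          rw [mul_zero, zero_add] at this
          apply this.congr; intro k; rw [hu]; simp [div_eq_mul_inv, hD]
        have hw' : Tendsto w atTop (𝓝 x) := by
          have : Tendsto (fun k : ℕ => β * (D k)⁻¹ + c k) atTop (𝓝 (β * 0 + x)) :=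
            (hDinv.const_mul β).add hc
          rw [mul_zero, zero_add] at this
          apply this.congr; intro k; rw [hw]; simp [div_eq_mul_inv, hD]
        have := (hu'.add hw').div_const 2
        simpa using this
      have hfac3 : Tendsto (fun k : ℕ => |Real.sin ((u k + w k) / 2)|) atTop (𝓝 |Real.sin x|) :=
        ((Real.continuous_sin.tendsto x).comp hm).abs
      have hF : Tendsto (fun k : ℕ =>
          |α - β| * ((k : ℝ) / D k) * |Real.sin (ε k / 2) / (ε k / 2)|
            * |Real.sin ((u k + w k) / 2)|) atTop
          (𝓝 (|α - β| * (σ ^ 2)⁻¹ * 1 * |Real.sin x|)) :=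
        (hfac1.mul hfac2).mul hfac3
      have hval : |α - β| * (σ ^ 2)⁻¹ * 1 * |Real.sin x| = |β - α| / σ ^ 2 * |Real.sin x| := by
        rw [abs_sub_comm]; ring
      rw [hval] at hF
      apply hF.congr
      intro k
      have huw : u k - w k = ε k := by
        rw [hu, hw, hε]; simp only [hD]; ring
      have hcc : Real.cos (u k) - Real.cos (w k) =
          -2 * Real.sin ((u k + w k) / 2) * Real.sin (ε k / 2) := by
        rw [Real.cos_sub_cos, huw]
      rw [hcc]
      have hεk := hεne k
      have hεabs : |ε k| = |α - β| / D k := by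
        rw [hε, abs_div, abs_of_pos (hDpos k)]
      have hne : |ε k| ≠ 0 := abs_ne_zero.mpr hεk
      rw [abs_mul, abs_mul, abs_div, abs_div, hεabs]
      rw [show |(-2 : ℝ)| = 2 by norm_num, show |(2:ℝ)| = 2 by norm_num]
      have hab' : |α - β| ≠ 0 := abs_ne_zero.mpr (sub_ne_zero.mpr hab)
      have hD0 : D k ≠ 0 := (hDpos k).ne'
      field_simp
  refine ⟨hmain, fun hs hab => ?_⟩
  rw [hmain.liminf_eq]
  have h1 : 0 < |β - α| := abs_pos.mpr (sub_ne_zero.mpr (Ne.symm hab))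
  have h2 : 0 < |Real.sin x| := abs_pos.mpr hs
  positivity
end
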